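/- Let v : [t_{n-1}, t_n] → ℝ be continuous with continuous derivative, and let Π⁺v be the affine function with Π⁺v(t_{n-1}) = v(t_{n-1}) and ∫_{t_{n-1}}^{t_n}(v - Π⁺v) dt = 0, i.e. Π⁺v(t) = v(t_{n-1}) + ((v̄ - v(t_{n-1}))/(k_n/2))·(t - t_{n-1}) with v̄ the mean value of v. Then sup_{t} |Π⁺v(t)| ≤ 3·sup_t |v(t)| and sup_t |(Π⁺v)'(t)| ≤ (2/k_n)·∫_{t_{n-1}}^{t_n} |v'(t)| dt. -/

import Mathlib

open MeasureTheory intervalIntegral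

theorem stmt7 (a b : ℝ) (hab : a < b) (v v' : ℝ → ℝ)
    (hderiv : ∀ s ∈ Set.Icc a b, HasDerivAt v (v' s) s)
    (hcont : ContinuousOn v' (Set.Icc a b))
    (S : ℝ) (hS : ∀ s ∈ Set.Icc a b, |v s| ≤ S) :
    (∀ t ∈ Set.Icc a b,
        |v a + ((((b - a)⁻¹ * ∫ s in a..b, v s) - v a) / ((b - a) / 2)) * (t - a)|
          ≤ 3 * S)
    ∧ |(((b - a)⁻¹ * ∫ s in a..b, v s) - v a) / ((b - a) / 2)|
        ≤ (2 / (b - a)) * ∫ s in a..b, |v' s| := by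
  have hba : (0:ℝ) < b - a := sub_pos.2 hab
  have hba' : b - a ≠ 0 := ne_of_gt hba
  have hcv : ContinuousOn v (Set.Icc a b) := fun s hs =>
    ((hderiv s hs).continuousAt).continuousWithinAt
  have hvi : IntervalIntegrable v volume a b := hcv.intervalIntegrable_of_Icc hab.le
  have hv'i : IntervalIntegrable v' volume a b := hcont.intervalIntegrable_of_Icc hab.le
  have hS0 : 0 ≤ S := (abs_nonneg _).trans (hS a ⟨le_refl a, hab.le⟩)
  set I : ℝ := ∫ s in a..b, v s with hI
  set C : ℝ := ∫ s in a..b, |v' s| with hC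
  -- bound on the mean value
  have hIm : |I| ≤ S * (b - a) := by
    have h := intervalIntegral.norm_integral_le_of_norm_le_const (C := S) (f := v)
      (a := a) (b := b) (fun x hx => by
        rw [Set.uIoc_of_le hab.le] at hx
        exact hS x ⟨hx.1.le, hx.2⟩)
    rwa [Real.norm_eq_abs, abs_of_pos hba] at h
  have hmean : |(b - a)⁻¹ * I| ≤ S := by
    rw [abs_mul, abs_of_pos (inv_pos.2 hba)]
    calc (b - a)⁻¹ * |I| ≤ (b - a)⁻¹ * (S * (b - a)) := by
          exact mul_le_mul_of_nonneg_left hIm (inv_pos.2 hba).le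
      _ = S := by field_simp
  -- key pointwise bound via FTC
  have hkey : ∀ s ∈ Set.Icc a b, |v s - v a| ≤ C := by
    intro s hs
    have hsub : Set.uIcc a s ⊆ Set.Icc a b := by
      rw [Set.uIcc_of_le hs.1]
      exact Set.Icc_subset_Icc le_rfl hs.2
    have hint : IntervalIntegrable v' volume a s :=
      hv'i.mono_set (by rw [Set.uIcc_of_le hab.le] at *; exact hsub)
    have hftc : (∫ u in a..s, v' u) = v s - v a :=
      intervalIntegral.integral_eq_sub_of_hasDerivAt
        (fun x hx => hderiv x (hsub hx)) hint
    rw [← hftc]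
    have h1 : |∫ u in a..s, v' u| ≤ ∫ u in a..s, |v' u| :=
      intervalIntegral.abs_integral_le_integral_abs hs.1
    have habs_int : IntervalIntegrable (fun u => |v' u|) volume a b := hv'i.abs
    have h2 : (∫ u in a..s, |v' u|) ≤ ∫ u in a..b, |v' u| :=
      intervalIntegral.integral_mono_interval le_rfl hs.1 hs.2
        (Filter.Eventually.of_forall fun u => abs_nonneg _) habs_int
    exact h1.trans h2
  have hC0 : 0 ≤ C := (abs_nonneg (v a - v a)).trans (hkey a ⟨le_rfl, hab.le⟩)
  -- bound |m - v a| ≤ C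
  have hdiff : |(b - a)⁻¹ * I - v a| ≤ C := by
    have heq : (b - a)⁻¹ * I - v a = (b - a)⁻¹ * ∫ s in a..b, (v s - v a) := by
      rw [intervalIntegral.integral_sub hvi (intervalIntegrable_const),
        intervalIntegral.integral_const, smul_eq_mul, mul_sub]
      field_simp
      rfl
    rw [heq]
    have h := intervalIntegral.norm_integral_le_of_norm_le_const (C := C)
      (f := fun s => v s - v a) (a := a) (b := b) (fun x hx => by
        rw [Set.uIoc_of_le hab.le] at hx
        exact hkey x ⟨hx.1.le, hx.2⟩)
    rw [Real.norm_eq_abs, abs_of_pos hba] at h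
    rw [abs_mul, abs_of_pos (inv_pos.2 hba)]
    calc (b - a)⁻¹ * |∫ s in a..b, (v s - v a)| ≤ (b - a)⁻¹ * (C * (b - a)) :=
          mul_le_mul_of_nonneg_left h (inv_pos.2 hba).le
      _ = C := by field_simp
  constructor
  · intro t ht
    set θ : ℝ := (t - a) / (b - a) with hθ
    have hθ0 : 0 ≤ θ := div_nonneg (sub_nonneg.2 ht.1) hba.le
    have hθ1 : θ ≤ 1 := by
      rw [hθ, div_le_one hba]
      linarith [ht.2]
    have heq : v a + (((b - a)⁻¹ * I - v a) / ((b - a) / 2)) * (t - a)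
        = (1 - 2*θ) * v a + 2*θ * ((b - a)⁻¹ * I) := by
      rw [hθ]; field_simp; ring
    rw [heq]
    calc |(1 - 2*θ) * v a + 2*θ * ((b - a)⁻¹ * I)|
        ≤ |(1 - 2*θ) * v a| + |2*θ * ((b - a)⁻¹ * I)| := abs_add_le _ _
      _ = |1 - 2*θ| * |v a| + |2*θ| * |(b - a)⁻¹ * I| := by rw [abs_mul, abs_mul]
      _ ≤ 1 * S + 2 * S := add_le_add
          (mul_le_mul (abs_le.2 ⟨by linarith, by linarith⟩) (hS a ⟨le_rfl, hab.le⟩)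
            (abs_nonneg _) one_pos.le)
          (mul_le_mul (by rw [abs_of_nonneg (by linarith : (0:ℝ) ≤ 2*θ)]; linarith)
            hmean (abs_nonneg _) (by norm_num))
      _ = 3 * S := by ring
  · rw [abs_div, abs_of_pos (by linarith : (0:ℝ) < (b - a)/2)]
    rw [div_le_iff₀ (by linarith : (0:ℝ) < (b - a)/2)]
    calc |(b - a)⁻¹ * I - v a| ≤ C := hdiff
      _ = (2 / (b - a) * C) * ((b - a) / 2) := by field_simp
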